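/- Let S be a semigroup and a ∈ S. The following are equivalent: (1) a^k is H-related to a^t for some k > t; (2) a^i is H-related to a^t for all i ≥ t; (3) the H-class of a^t is a group. -/
import Mathlib


variable {S : Type*} [Semigroup S]

/-- Primary conjugacy: `a = x*y` and `b = y*x` for some `x, y`. -/
def PConj (a b : S) : Prop := ∃ x y : S, a = x * y ∧ b = y * x

/-- Conjugacy: the transitive closure of primary conjugacy. -/
def SConj : S → S → Prop := Relation.TransGen PConj

/-- `pw a n` is `a ^ n` for `n ≥ 1` (with junk value `a` at `n = 0`). -/
def pw (a : S) : ℕ → S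
  | 0 => a
  | 1 => a
  | n + 2 => pw a (n + 1) * a

/-- An element is a group element iff it lies in some subgroup of `S`:
there is an idempotent `e` acting as identity on `a`, and an inverse of `a`
relative to `e`. -/
def IsGroupElement (a : S) : Prop :=
  ∃ e b : S, e * e = e ∧ e * a = a ∧ a * e = a ∧ a * b = e ∧ b * a = e

/-- An element is group-bound if some positive power is a group element. -/
def GroupBound (a : S) : Prop := ∃ n : ℕ, 1 ≤ n ∧ IsGroupElement (pw a n)

/-- Green's L-relation: same principal left ideal in `S¹`. -/
def LRel (a b : S) : Prop :=
  (∃ u : WithOne S, u * (a : WithOne S) = (b : WithOne S)) ∧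
  (∃ u : WithOne S, u * (b : WithOne S) = (a : WithOne S))

/-- Green's R-relation: same principal right ideal in `S¹`. -/
def RRel (a b : S) : Prop :=
  (∃ u : WithOne S, (a : WithOne S) * u = (b : WithOne S)) ∧
  (∃ u : WithOne S, (b : WithOne S) * u = (a : WithOne S))

/-- Green's H-relation. -/
def HRel (a b : S) : Prop := LRel a b ∧ RRel a b

/-- Green's D-relation. -/
def DRel (a b : S) : Prop := ∃ c : S, LRel a c ∧ RRel c b

section MonoidAux

variable {M : Type*} [Monoid M]

def HpowAux (A : M) (i t : ℕ) : Prop :=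
  ((∃ u, u * A ^ i = A ^ t) ∧ (∃ u, u * A ^ t = A ^ i)) ∧
  ((∃ u, A ^ i * u = A ^ t) ∧ (∃ u, A ^ t * u = A ^ i))

lemma pow_descend_left_aux (A u : M) (t r : ℕ) (h : u * A ^ (t + r) = A ^ t) :
    ∀ m, u ^ m * A ^ (t + m * r) = A ^ t := by
  intro m
  induction m with
  | zero => simp
  | succ m ih =>
    have e1 : A ^ (t + (m + 1) * r) = A ^ (t + r) * A ^ (m * r) := by
      rw [← pow_add]; congr 1 <;> ring
    rw [pow_succ, e1, mul_assoc, ← mul_assoc u, h, ← pow_add]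
    exact ih

lemma pow_descend_right_aux (A v : M) (t r : ℕ) (h : A ^ (t + r) * v = A ^ t) :
    ∀ m, A ^ (t + m * r) * v ^ m = A ^ t := by
  intro m
  induction m with
  | zero => simp
  | succ m ih =>
    have e1 : A ^ (t + (m + 1) * r) = A ^ (m * r) * A ^ (t + r) := by
      rw [← pow_add]; congr 1 <;> ring
    have e2 : A ^ (m * r) * A ^ t = A ^ (t + m * r) := by
      rw [← pow_add]; congr 1 <;> ring
    rw [pow_succ', e1, mul_assoc, ← mul_assoc (A ^ (t + r)), h, ← mul_assoc, e2]
    exact ih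

lemma left_pow_aux (A E B : M) (t : ℕ) (h2 : E * A ^ t = A ^ t) (h5 : B * A ^ t = E) :
    ∀ k, 1 ≤ k → B ^ k * A ^ (t * k) = E := by
  intro k hk
  induction k, hk using Nat.le_induction with
  | base => simpa using h5
  | succ k hk ih =>
    have e1 : A ^ (t * (k + 1)) = A ^ (t * k) * A ^ t := by
      rw [← pow_add]; congr 1 <;> ring
    rw [pow_succ', e1, mul_assoc, ← mul_assoc (B ^ k), ih, h2]
    exact h5

lemma right_pow_aux (A E B : M) (t : ℕ) (h3 : A ^ t * E = A ^ t) (h4 : A ^ t * B = E) :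
    ∀ k, 1 ≤ k → A ^ (t * k) * B ^ k = E := by
  intro k hk
  induction k, hk using Nat.le_induction with
  | base => simpa using h4
  | succ k hk ih =>
    have e1 : A ^ (t * (k + 1)) = A ^ t * A ^ (t * k) := by
      rw [← pow_add]; congr 1 <;> ring
    rw [pow_succ, e1, mul_assoc, ← mul_assoc (A ^ (t * k)), ih, ← mul_assoc, h3]
    exact h4

lemma Hpow_of_exists_aux (A : M) (t : ℕ) (ht : 1 ≤ t) (k : ℕ) (hk : t < k)
    (h : HpowAux A k t) : ∀ i, t ≤ i → HpowAux A i t := by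
  obtain ⟨⟨⟨u, hu⟩, -⟩, ⟨⟨v, hv⟩, -⟩⟩ := h
  set r := k - t with hr
  have hk' : k = t + r := by omega
  rw [hk'] at hu hv
  have hu' := pow_descend_left_aux A u t r hu
  have hv' := pow_descend_right_aux A v t r hv
  intro i hi
  have hir : i ≤ i * r := Nat.le_mul_of_pos_right i (by omega)
  set s := t + i * r - i with hs
  have hsi : s + i = t + i * r := by omega
  refine ⟨⟨⟨u ^ i * A ^ s, ?_⟩, ⟨A ^ (i - t), ?_⟩⟩,
    ⟨⟨A ^ s * v ^ i, ?_⟩, ⟨A ^ (i - t), ?_⟩⟩⟩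
  · have e2 : A ^ s * A ^ i = A ^ (t + i * r) := by rw [← pow_add, hsi]
    rw [mul_assoc, e2]; exact hu' i
  · rw [← pow_add]
    congr 1 <;> omega
  · have e2 : A ^ i * A ^ s = A ^ (t + i * r) := by
      rw [← pow_add]; congr 1 <;> omega
    rw [← mul_assoc, e2]; exact hv' i
  · rw [← pow_add]
    congr 1 <;> omega

lemma Hpow_to_group_aux (A : M) (t : ℕ) (h : HpowAux A (2 * t) t) :
    ∃ z w : M,
      (A ^ t * z) * (A ^ t * z) = A ^ t * z ∧
      (A ^ t * z) * A ^ t = A ^ t ∧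
      A ^ t * (A ^ t * z) = A ^ t ∧
      A ^ t * (A ^ t * w) = A ^ t * z ∧
      (A ^ t * w) * A ^ t = A ^ t * z := by
  obtain ⟨⟨⟨x, hx⟩, -⟩, ⟨⟨z, hz⟩, -⟩⟩ := h
  have h2t : A ^ (2 * t) = A ^ t * A ^ t := by rw [two_mul, pow_add]
  rw [h2t] at hx hz
  set P := A ^ t with hP
  clear_value P
  -- hx : x * (P * P) = P ; hz : P * P * z = P
  have key : P * z = x * P := by
    conv_lhs => rw [← hx]
    rw [mul_assoc, hz]
  have hEP : (P * z) * P = P := by rw [key, mul_assoc, hx]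
  have hPE : P * (P * z) = P := by rw [← mul_assoc]; exact hz
  have hEE : (P * z) * (P * z) = P * z := by rw [← mul_assoc, hEP]
  have hPr0 : P * ((P * z) * z) = P * z := by rw [← mul_assoc, hPE]
  have hl0P : (x * (x * P)) * P = P * z := by
    rw [mul_assoc, mul_assoc, hx]; exact key.symm
  have hPX : P * ((P * z) * ((P * z) * z)) = P * z := by
    rw [← mul_assoc, hPE]; exact hPr0
  have hPB : P * (((P * z) * ((P * z) * z)) * (P * z)) = P * z := by
    rw [← mul_assoc, hPX, hEE]
  have hBP : (((P * z) * ((P * z) * z)) * (P * z)) * P = P * z := by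
    rw [mul_assoc, hEP]
    nth_rewrite 1 [← hl0P]
    rw [mul_assoc (x * (x * P)), hPr0, mul_assoc, hEP, hl0P]
  have hw : P * (z * (((P * z) * z) * (P * z))) = ((P * z) * ((P * z) * z)) * (P * z) := by
    rw [← mul_assoc, ← mul_assoc]
  refine ⟨z, z * (((P * z) * z) * (P * z)), hEE, hEP, hPE, ?_, ?_⟩
  · rw [hw]; exact hPB
  · rw [hw]; exact hBP

lemma group_elt_Hpow_aux (A E B : M) (t : ℕ) (ht : 1 ≤ t)
    (h2 : E * A ^ t = A ^ t) (h3 : A ^ t * E = A ^ t)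
    (h4 : A ^ t * B = E) (h5 : B * A ^ t = E) :
    ∀ i, t ≤ i → HpowAux A i t := by
  intro i hi
  have hi1 : 1 ≤ i := le_trans ht hi
  have hL := left_pow_aux A E B t h2 h5 i hi1
  have hR := right_pow_aux A E B t h3 h4 i hi1
  have hti : i ≤ t * i := Nat.le_mul_of_pos_left i (by omega)
  set s := t * i + t - i with hs
  have hsi : s + i = t * i + t := by omega
  refine ⟨⟨⟨B ^ i * A ^ s, ?_⟩, ⟨A ^ (i - t), ?_⟩⟩,
    ⟨⟨A ^ s * B ^ i, ?_⟩, ⟨A ^ (i - t), ?_⟩⟩⟩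
  · have e2 : A ^ s * A ^ i = A ^ (t * i) * A ^ t := by
      rw [← pow_add, ← pow_add]; congr 1 <;> omega
    rw [mul_assoc, e2, ← mul_assoc, hL, h2]
  · rw [← pow_add]
    congr 1 <;> omega
  · have e2 : A ^ i * A ^ s = A ^ t * A ^ (t * i) := by
      rw [← pow_add, ← pow_add]; congr 1 <;> omega
    rw [← mul_assoc, e2, mul_assoc, hR, h3]
  · rw [← pow_add]
    congr 1 <;> omega

end MonoidAux

lemma pw_coe (a : S) : ∀ n, 1 ≤ n → ((pw a n : S) : WithOne S) = (a : WithOne S) ^ n := by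
  intro n
  induction n with
  | zero => omega
  | succ n ih =>
    intro _
    cases n with
    | zero => simp [pw]
    | succ m =>
      show ((pw a (m + 1) * a : S) : WithOne S) = (a : WithOne S) ^ (m + 2)
      rw [WithOne.coe_mul, ih (by omega)]
      exact (pow_succ _ _).symm

lemma coe_mul_cases (s : S) (u : WithOne S) :
    ∃ w : S, (s : WithOne S) * u = (w : WithOne S) := by
  rcases eq_or_ne u 1 with h | h
  · exact ⟨s, by rw [h, mul_one]⟩
  · obtain ⟨u0, hu0⟩ := WithOne.ne_one_iff_exists.mp h
    exact ⟨s * u0, by rw [← hu0, ← WithOne.coe_mul]⟩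

theorem power_HRel_tfae (a : S) (t : ℕ) (ht : 1 ≤ t) :
    ((∃ k : ℕ, t < k ∧ HRel (pw a k) (pw a t)) ↔
      (∀ i : ℕ, t ≤ i → HRel (pw a i) (pw a t))) ∧
    ((∀ i : ℕ, t ≤ i → HRel (pw a i) (pw a t)) ↔ IsGroupElement (pw a t)) := by
  have hiff : ∀ i, 1 ≤ i → (HRel (pw a i) (pw a t) ↔ HpowAux (a : WithOne S) i t) := by
    intro i hi
    unfold HRel LRel RRel HpowAux
    rw [pw_coe a i hi, pw_coe a t ht]
  constructor
  · constructor
    · rintro ⟨k, hk, hH⟩ i hi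
      rw [hiff i (le_trans ht hi)]
      exact Hpow_of_exists_aux (a : WithOne S) t ht k hk
        ((hiff k (by omega)).mp hH) i hi
    · intro h
      exact ⟨t + 1, by omega, h (t + 1) (by omega)⟩
  · constructor
    · intro h
      have h2 : HpowAux (a : WithOne S) (2 * t) t :=
        (hiff (2 * t) (by omega)).mp (h (2 * t) (by omega))
      obtain ⟨z, w, hEE, hEP, hPE, hPB, hBP⟩ := Hpow_to_group_aux (a : WithOne S) t h2
      have hc : ((pw a t : S) : WithOne S) = (a : WithOne S) ^ t := pw_coe a t ht
      obtain ⟨e0, he0⟩ := coe_mul_cases (pw a t) z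
      obtain ⟨b0, hb0⟩ := coe_mul_cases (pw a t) w
      rw [hc] at he0 hb0
      refine ⟨e0, b0, ?_, ?_, ?_, ?_, ?_⟩ <;> apply WithOne.coe_inj.mp
      · rw [WithOne.coe_mul, ← he0]; exact hEE
      · rw [WithOne.coe_mul, ← he0, hc]; exact hEP
      · rw [WithOne.coe_mul, ← he0, hc]; exact hPE
      · rw [WithOne.coe_mul, ← he0, ← hb0, hc]; exact hPB
      · rw [WithOne.coe_mul, ← he0, ← hb0, hc]; exact hBP
    · rintro ⟨e, b, h1, h2, h3, h4, h5⟩ i hi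
      rw [hiff i (le_trans ht hi)]
      have hc : ((pw a t : S) : WithOne S) = (a : WithOne S) ^ t := pw_coe a t ht
      have c1 : (e : WithOne S) * (a : WithOne S) ^ t = (a : WithOne S) ^ t := by
        rw [← hc, ← WithOne.coe_mul, h2]
      have c2 : (a : WithOne S) ^ t * (e : WithOne S) = (a : WithOne S) ^ t := by
        rw [← hc, ← WithOne.coe_mul, h3]
      have c3 : (a : WithOne S) ^ t * (b : WithOne S) = (e : WithOne S) := by
        rw [← hc, ← WithOne.coe_mul, h4]
      have c4 : (b : WithOne S) * (a : WithOne S) ^ t = (e : WithOne S) := by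
        rw [← hc, ← WithOne.coe_mul, h5]
      exact group_elt_Hpow_aux (a : WithOne S) (e : WithOne S) (b : WithOne S) t ht
        c1 c2 c3 c4 i hi
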